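/- On the elliptic curve E : y^2 + 6308333·xy + 8325824903545553131·y = x^3 over Q, the point P = (8318014288129, 8325824903545553131) has order exactly 6, and 2P = (0,0). -/

import Mathlib

def E : WeierstrassCurve.Affine ℚ :=
  ⟨6308333, 0, 8325824903545553131, 0, 0⟩

open WeierstrassCurve.Affine WeierstrassCurve.Affine.Point

lemma some_ext {F : Type*} [Field F] {W : WeierstrassCurve.Affine F} {x₁ y₁ x₂ y₂ : F}
    (h₁ : W.Nonsingular x₁ y₁) (h₂ : W.Nonsingular x₂ y₂) (hx : x₁ = x₂) (hy : y₁ = y₂) :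
    Point.some _ _ h₁ = Point.some _ _ h₂ := by
  subst hx; subst hy; rfl

lemma hP : E.Nonsingular 8318014288129 8325824903545553131 := by
  rw [nonsingular_iff, equation_iff]
  refine ⟨by norm_num [E], Or.inr (by norm_num [E])⟩

lemma h0 : E.Nonsingular 0 0 := by
  rw [nonsingular_iff, equation_iff]
  refine ⟨by norm_num [E], Or.inr (by norm_num [E])⟩

lemma hS : E.Nonsingular 0 (-8325824903545553131) := by
  rw [nonsingular_iff, equation_iff]
  refine ⟨by norm_num [E], Or.inr (by norm_num [E])⟩

lemma hPy : (8325824903545553131 : ℚ) ≠ E.negY 8318014288129 8325824903545553131 := by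
  norm_num [negY, E]

lemma h0y : (0 : ℚ) ≠ E.negY 0 0 := by
  norm_num [negY, E]

lemma slopeP : E.slope 8318014288129 8318014288129 8325824903545553131 8325824903545553131
    = 2001878 := by
  rw [slope_of_Y_ne rfl hPy]
  rw [div_eq_iff (by norm_num [negY, E])]
  norm_num [negY, E]

lemma double_P : Point.some _ _ hP + Point.some _ _ hP = Point.some _ _ h0 := by
  rw [add_of_Y_ne hPy]
  exact some_ext _ _ (by norm_num [addX, slopeP, E])
    (by norm_num [addY, negAddY, addX, negY, slopeP, E])

lemma slope0 : E.slope 0 0 0 0 = 0 := by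
  rw [slope_of_Y_ne rfl h0y]
  norm_num [negY, E]

lemma double_Q : Point.some _ _ h0 + Point.some _ _ h0 = Point.some _ _ hS := by
  rw [add_of_Y_ne h0y]
  exact some_ext _ _ (by norm_num [addX, slope0, E])
    (by norm_num [addY, negAddY, addX, negY, slope0, E])

lemma triple_Q : Point.some _ _ h0 + Point.some _ _ hS = 0 :=
  add_of_Y_eq rfl (by norm_num [negY, E])

/-- On `E`, the point `P = (8318014288129, 8325824903545553131)` has order exactly 6,
and `2P = (0,0)`. -/
theorem order_six_and_double :
    ∃ h : E.Nonsingular 8318014288129 8325824903545553131,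
      ∃ h0 : E.Nonsingular 0 0,
        addOrderOf (WeierstrassCurve.Affine.Point.some _ _ h) = 6 ∧
        (2 : ℤ) • WeierstrassCurve.Affine.Point.some _ _ h = WeierstrassCurve.Affine.Point.some _ _ h0 := by
  refine ⟨hP, h0, ?_, ?_⟩
  · have h1 : (1 : ℕ) • Point.some _ _ hP = Point.some _ _ hP := one_nsmul _
    have h2 : (2 : ℕ) • Point.some _ _ hP = Point.some _ _ h0 := by
      rw [two_nsmul, double_P]
    have h3 : (3 : ℕ) • Point.some _ _ hP = Point.some _ _ h0 + Point.some _ _ hP := by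
      rw [show (3 : ℕ) = 2 + 1 by rfl, add_nsmul, h2, one_nsmul]
    have h4 : (4 : ℕ) • Point.some _ _ hP = Point.some _ _ hS := by
      rw [show (4 : ℕ) = 2 + 2 by rfl, add_nsmul, h2, double_Q]
    have h5 : (5 : ℕ) • Point.some _ _ hP = Point.some _ _ hS + Point.some _ _ hP := by
      rw [show (5 : ℕ) = 4 + 1 by rfl, add_nsmul, h4, one_nsmul]
    have h6 : (6 : ℕ) • Point.some _ _ hP = 0 := by
      rw [show (6 : ℕ) = 2 + 4 by rfl, add_nsmul, h2, h4]; exact triple_Q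
    rw [addOrderOf_eq_iff (by norm_num)]
    refine ⟨h6, ?_⟩
    intro m hm hm'
    interval_cases m
    · rw [h1]; exact some_ne_zero _
    · rw [h2]; exact some_ne_zero _
    · rw [h3, add_of_X_ne (by norm_num)]; exact some_ne_zero _
    · rw [h4]; exact some_ne_zero _
    · rw [h5, add_of_X_ne (by norm_num)]; exact some_ne_zero _
  · rw [two_zsmul, double_P]
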